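/- arXiv:math/9404215 — 3 statements merged into one kernel-verified Lean document; each statement's English description precedes it below -/
import Mathlib

section
/- Suppose every bounded linear operator from E to F is unconditionally converging and every bounded linear operator from E to c₀ is unconditionally converging. Then every bounded linear operator from E to c₀(F) (the space of norm-null sequences in F with sup norm) is unconditionally converging. -/
open Filter Topology NormedSpace ContinuousLinearMap ZeroAtInfty

noncomputable section

/-- A formal series is weakly unconditionally Cauchy. -/
def WUC {E : Type*} [NormedAddCommGroup E] [NormedSpace ℝ E] (x : ℕ → E) : Prop :=
  ∀ φ : E →L[ℝ] ℝ, Summable fun i => |φ (x i)|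

/-- A series is unconditionally convergent: every subseries is norm convergent. -/
def UncondConv {F : Type*} [NormedAddCommGroup F] [NormedSpace ℝ F] (y : ℕ → F) : Prop :=
  ∀ s : Set ℕ, ∃ a : F,
    Tendsto (fun n => ∑ i ∈ Finset.range n, Set.indicator s y i) atTop (𝓝 a)

def WeaklyConvTo {E : Type*} [NormedAddCommGroup E] [NormedSpace ℝ E]
    (x : ℕ → E) (x₀ : E) : Prop :=
  ∀ φ : E →L[ℝ] ℝ, Tendsto (fun n => φ (x n)) atTop (𝓝 (φ x₀))

def WeaklyCauchy {E : Type*} [NormedAddCommGroup E] [NormedSpace ℝ E] (x : ℕ → E) : Prop :=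
  ∀ φ : E →L[ℝ] ℝ, ∃ l : ℝ, Tendsto (fun n => φ (x n)) atTop (𝓝 l)

/-- Unconditionally converging operator. -/
def UCop {E F : Type*} [NormedAddCommGroup E] [NormedSpace ℝ E]
    [NormedAddCommGroup F] [NormedSpace ℝ F] (T : E →L[ℝ] F) : Prop :=
  ∀ x : ℕ → E, WUC x → UncondConv fun i => T (x i)

/-- Completely continuous operator. -/
def CCop {E F : Type*} [NormedAddCommGroup E] [NormedSpace ℝ E]
    [NormedAddCommGroup F] [NormedSpace ℝ F] (T : E →L[ℝ] F) : Prop :=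
  ∀ (x : ℕ → E) (x₀ : E), WeaklyConvTo x x₀ →
    Tendsto (fun n => T (x n)) atTop (𝓝 (T x₀))

/-- Weakly compact operator: the image of the closed unit ball is relatively
weakly compact. -/
def WCompactOp {E F : Type*} [NormedAddCommGroup E] [NormedSpace ℝ E]
    [NormedAddCommGroup F] [NormedSpace ℝ F] (T : E →L[ℝ] F) : Prop :=
  IsCompact (closure (toWeakSpaceCLM ℝ F '' (T '' Metric.closedBall 0 1)))

/-- The Dunford–Pettis property. -/
def DPP (E : Type*) [NormedAddCommGroup E] [NormedSpace ℝ E] : Prop :=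
  ∀ (F : Type) (_ : NormedAddCommGroup F) (_ : NormedSpace ℝ F) (_ : CompleteSpace F),
    ∀ T : E →L[ℝ] F, WCompactOp T → CCop T

/-- The adjoint of an operator between Banach spaces. -/
def opAdj {E F : Type*} [NormedAddCommGroup E] [NormedSpace ℝ E]
    [NormedAddCommGroup F] [NormedSpace ℝ F] (T : E →L[ℝ] F) :
    StrongDual ℝ F →L[ℝ] StrongDual ℝ E :=
  (ContinuousLinearMap.compSL E F ℝ (RingHom.id ℝ) (RingHom.id ℝ)).flip T

/-- The second adjoint (bitranspose). -/
def biAdj {E F : Type*} [NormedAddCommGroup E] [NormedSpace ℝ E]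
    [NormedAddCommGroup F] [NormedSpace ℝ F] (T : E →L[ℝ] F) :
    StrongDual ℝ (StrongDual ℝ E) →L[ℝ] StrongDual ℝ (StrongDual ℝ F) :=
  opAdj (opAdj T)


/-- Terms of a series with convergent partial sums tend to zero. -/
lemma terms_tendsto_zero {F : Type*} [NormedAddCommGroup F] (y : ℕ → F) (a : F)
    (h : Tendsto (fun n => ∑ i ∈ Finset.range n, y i) atTop (𝓝 a)) :
    Tendsto y atTop (𝓝 0) := by
  have h2 := (h.comp (tendsto_add_atTop_nat 1)).sub h
  simp only [Function.comp, Finset.sum_range_succ, sub_self] at h2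
  simpa using h2

lemma telescope_blocks {M : Type*} [AddCommMonoid M] (f : ℕ → M) (a : ℕ → ℕ)
    (ha : Monotone a) (J : ℕ) :
    ∑ j ∈ Finset.range J, ∑ i ∈ Finset.Ico (a j) (a (j + 1)), f i
      = ∑ i ∈ Finset.Ico (a 0) (a J), f i := by
  induction J with
  | zero => simp
  | succ J ih =>
      rw [Finset.sum_range_succ, ih,
        Finset.sum_Ico_consecutive f (ha (Nat.zero_le J)) (ha (Nat.le_succ J))]

/-- Block sums of a WUC series are WUC. -/
lemma WUC_blocks {E : Type*} [NormedAddCommGroup E] [NormedSpace ℝ E] (x : ℕ → E)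
    (hx : WUC x) (a : ℕ → ℕ) (ha : Monotone a) :
    WUC (fun j => ∑ i ∈ Finset.Ico (a j) (a (j + 1)), x i) := by
  intro φ
  have hsum := hx φ
  have key : ∀ j, |φ (∑ i ∈ Finset.Ico (a j) (a (j + 1)), x i)|
      ≤ ∑ i ∈ Finset.Ico (a j) (a (j + 1)), |φ (x i)| := by
    intro j
    rw [map_sum]
    exact Finset.abs_sum_le_sum_abs (fun i => φ (x i)) _
  have hb : Summable (fun j => ∑ i ∈ Finset.Ico (a j) (a (j + 1)), |φ (x i)|) := by
    apply summable_of_sum_range_le (c := ∑' i, |φ (x i)|)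
      (fun j => Finset.sum_nonneg fun i _ => abs_nonneg _)
    intro J
    rw [telescope_blocks (fun i => |φ (x i)|) a ha J]
    calc ∑ i ∈ Finset.Ico (a 0) (a J), |φ (x i)|
        ≤ ∑ i ∈ Finset.range (a J), |φ (x i)| := by
          refine Finset.sum_le_sum_of_subset_of_nonneg ?_ (fun i _ _ => abs_nonneg _)
          intro i hi
          simp only [Finset.mem_Ico] at hi
          exact Finset.mem_range.mpr hi.2
      _ ≤ ∑' i, |φ (x i)| := Summable.sum_le_tsum _ (fun i _ => abs_nonneg _) hsum
  exact hb.of_nonneg_of_le (fun j => abs_nonneg _) key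

/-- Evaluation at a point, as a continuous linear map on `C₀(ℕ, F)`. -/
def evC0 {F : Type*} [NormedAddCommGroup F] [NormedSpace ℝ F] (k : ℕ) :
    C₀(ℕ, F) →L[ℝ] F :=
  LinearMap.mkContinuous
    { toFun := fun f => f k
      map_add' := fun f g => rfl
      map_smul' := fun c f => rfl } 1
    (fun f => by
      rw [one_mul, ← ZeroAtInftyContinuousMap.norm_toBCF_eq_norm]
      exact f.toBCF.norm_coe_le_norm k)

@[simp] lemma evC0_apply {F : Type*} [NormedAddCommGroup F] [NormedSpace ℝ F] (k : ℕ)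
    (f : C₀(ℕ, F)) : evC0 k f = f k := rfl

lemma C0_norm_le {F : Type*} [NormedAddCommGroup F] (f : C₀(ℕ, F)) {C : ℝ} (hC : 0 ≤ C)
    (h : ∀ k, ‖f k‖ ≤ C) : ‖f‖ ≤ C := by
  rw [← ZeroAtInftyContinuousMap.norm_toBCF_eq_norm]
  exact (BoundedContinuousFunction.norm_le hC).mpr h

lemma C0_coe_le_norm {F : Type*} [NormedAddCommGroup F] (f : C₀(ℕ, F)) (k : ℕ) :
    ‖f k‖ ≤ ‖f‖ := by
  rw [← ZeroAtInftyContinuousMap.norm_toBCF_eq_norm]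
  exact f.toBCF.norm_coe_le_norm k


lemma case_one {E F : Type*} [NormedAddCommGroup E] [NormedSpace ℝ E]
    [NormedAddCommGroup F] [NormedSpace ℝ F]
    (h1 : ∀ T : E →L[ℝ] F, UCop T)
    (T : E →L[ℝ] C₀(ℕ, F)) (y : ℕ → E) (hy : WUC y)
    {ε : ℝ} (hε : 0 < ε) (k : ℕ)
    (inf : {j | ε ≤ ‖(T (y j)) k‖}.Infinite) : False := by
  obtain ⟨a, ha⟩ := h1 ((evC0 k).comp T) y hy Set.univ
  simp only [Set.indicator_univ] at ha
  have hterm := terms_tendsto_zero _ _ ha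
  obtain ⟨N, hN⟩ := Metric.tendsto_atTop.mp hterm ε hε
  obtain ⟨j, hj, hjN⟩ := inf.exists_gt N
  have h2 := hN j hjN.le
  rw [dist_zero_right] at h2
  simp only [ContinuousLinearMap.comp_apply, evC0_apply] at h2
  exact absurd h2 (not_lt.mpr hj)

lemma case_two {E F : Type*} [NormedAddCommGroup E] [NormedSpace ℝ E]
    [NormedAddCommGroup F] [NormedSpace ℝ F]
    (h2 : ∀ S : E →L[ℝ] C₀(ℕ, ℝ), UCop S)
    (T : E →L[ℝ] C₀(ℕ, F)) (y : ℕ → E) (hy : WUC y)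
    (kk : ℕ → ℕ) (hkk : Tendsto kk atTop atTop)
    {ε : ℝ} (hε : 0 < ε)
    (hlow : ∀ j, ε ≤ ‖(T (y j)) (kk j)‖) : False := by
  have hnz : ∀ j, (T (y j)) (kk j) ≠ 0 := by
    intro j h
    have := hlow j
    rw [h, norm_zero] at this
    linarith
  choose g hg1 hg2 using fun j => exists_dual_vector ℝ _ (norm_ne_zero_iff.mpr (hnz j))
  have hbound : ∀ (e : E) (j : ℕ), ‖g j ((T e) (kk j))‖ ≤ ‖T‖ * ‖e‖ := by
    intro e j
    calc ‖g j ((T e) (kk j))‖ ≤ ‖g j‖ * ‖(T e) (kk j)‖ := (g j).le_opNorm _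
      _ = ‖(T e) (kk j)‖ := by rw [hg1 j, one_mul]
      _ ≤ ‖T e‖ := C0_coe_le_norm _ _
      _ ≤ ‖T‖ * ‖e‖ := T.le_opNorm e
  have hzero : ∀ e : E, Tendsto (fun j => g j ((T e) (kk j))) (cocompact ℕ) (𝓝 0) := by
    intro e
    rw [cocompact_eq_atTop]
    have h0 : Tendsto (fun j => (T e) (kk j)) atTop (𝓝 0) := by
      have h0' := (T e).zero_at_infty'
      rw [cocompact_eq_atTop] at h0'
      exact h0'.comp hkk
    refine squeeze_zero_norm (fun j => ?_) (tendsto_zero_iff_norm_tendsto_zero.mp h0)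
    calc ‖g j ((T e) (kk j))‖ ≤ ‖g j‖ * ‖(T e) (kk j)‖ := (g j).le_opNorm _
      _ = ‖(T e) (kk j)‖ := by rw [hg1 j, one_mul]
  let S : E →L[ℝ] C₀(ℕ, ℝ) := LinearMap.mkContinuous
    { toFun := fun e => ⟨⟨fun j => g j ((T e) (kk j)), continuous_of_discreteTopology⟩, hzero e⟩
      map_add' := fun e₁ e₂ => by ext j; simp
      map_smul' := fun c e => by ext j; simp }
    ‖T‖ (fun e => C0_norm_le _ (mul_nonneg (norm_nonneg T) (norm_nonneg e)) (hbound e))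
  obtain ⟨a, ha⟩ := h2 S y hy Set.univ
  simp only [Set.indicator_univ] at ha
  have hterm := terms_tendsto_zero _ _ ha
  have hSlow : ∀ j, ε ≤ ‖S (y j)‖ := by
    intro j
    calc ε ≤ ‖(T (y j)) (kk j)‖ := hlow j
      _ = ‖g j ((T (y j)) (kk j))‖ := by
          rw [hg2 j]
          simp [Real.norm_eq_abs, abs_of_nonneg (norm_nonneg _)]
      _ = ‖(S (y j)) j‖ := rfl
      _ ≤ ‖S (y j)‖ := C0_coe_le_norm (S (y j)) j
  obtain ⟨N, hN⟩ := Metric.tendsto_atTop.mp hterm ε hε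
  have h3 := hN N le_rfl
  rw [dist_zero_right] at h3
  exact absurd h3 (not_lt.mpr (hSlow N))

theorem uc_into_c0_of_F {E F : Type*} [NormedAddCommGroup E] [NormedSpace ℝ E] [CompleteSpace E] [NormedAddCommGroup F] [NormedSpace ℝ F] [CompleteSpace F]
    (h1 : ∀ T : E →L[ℝ] F, UCop T)
    (h2 : ∀ T : E →L[ℝ] C₀(ℕ, ℝ), UCop T) :
    ∀ T : E →L[ℝ] C₀(ℕ, F), UCop T := by
  classical
  intro T x hx s
  set x' : ℕ → E := fun i => Set.indicator s x i with hx'def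
  have hind : ∀ i, Set.indicator s (fun i => T (x i)) i = T (x' i) := by
    intro i
    by_cases h : i ∈ s <;>
      simp [x', Set.indicator_of_mem, Set.indicator_of_notMem, h]
  have hx' : WUC x' := by
    intro φ
    refine (hx φ).of_nonneg_of_le (fun i => abs_nonneg _) (fun i => ?_)
    by_cases h : i ∈ s <;>
      simp [x', Set.indicator_of_mem, Set.indicator_of_notMem, h, abs_nonneg]
  suffices h : ∃ a, Tendsto (fun n => ∑ i ∈ Finset.range n, T (x' i)) atTop (𝓝 a) by
    obtain ⟨a, ha⟩ := h
    exact ⟨a, by simpa only [hind] using ha⟩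
  by_contra hC
  push_neg at hC
  have hnc : ¬ CauchySeq (fun n => ∑ i ∈ Finset.range n, T (x' i)) := by
    intro h
    obtain ⟨a, ha⟩ := cauchySeq_tendsto_of_complete h
    exact hC a ha
  rw [Metric.cauchySeq_iff'] at hnc
  push_neg at hnc
  obtain ⟨ε, hε, hbl⟩ := hnc
  have step : ∀ N, ∃ n, N < n ∧ ε ≤ ‖∑ i ∈ Finset.Ico N n, T (x' i)‖ := by
    intro N
    obtain ⟨n, hn, hd⟩ := hbl N
    have hne : n ≠ N := by
      rintro rfl
      rw [dist_self] at hd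
      linarith
    refine ⟨n, lt_of_le_of_ne hn (Ne.symm hne), ?_⟩
    rw [Finset.sum_Ico_eq_sub _ hn, ← dist_eq_norm]
    exact hd
  choose b hb1 hb2 using step
  let a : ℕ → ℕ := fun j => Nat.rec 0 (fun _ p => b p) j
  have hmono : StrictMono a := strictMono_nat_of_lt_succ (fun j => hb1 (a j))
  set y : ℕ → E := fun j => ∑ i ∈ Finset.Ico (a j) (a (j + 1)), x' i with hydef
  have hy : WUC y := WUC_blocks x' hx' a hmono.monotone
  have hTy : ∀ j, ε ≤ ‖T (y j)‖ := by
    intro j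
    have h := hb2 (a j)
    simpa [y, map_sum] using h
  have hk : ∀ j, ∃ k, ε / 2 ≤ ‖(T (y j)) k‖ := by
    intro j
    by_contra hcon
    push_neg at hcon
    have := C0_norm_le (T (y j)) (le_of_lt (half_pos hε)) (fun k => (hcon k).le)
    linarith [hTy j]
  choose kk hkk using hk
  by_cases hfin : ∃ k, {j | kk j = k}.Infinite
  · obtain ⟨k, hk'⟩ := hfin
    have hinf : {j | ε / 2 ≤ ‖(T (y j)) k‖}.Infinite :=
      hk'.mono (fun j hj => by rw [Set.mem_setOf_eq, ← hj]; exact hkk j)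
    exact case_one h1 T y hy (half_pos hε) k hinf
  · push_neg at hfin
    have htend : Tendsto kk atTop atTop := by
      rw [tendsto_atTop_atTop]
      intro K
      have hsub : {j | kk j < K} ⊆ ⋃ k ∈ Finset.range K, {j | kk j = k} := by
        intro j hj
        simp only [Finset.mem_range, Set.mem_iUnion, Set.mem_setOf_eq]
        exact ⟨kk j, hj, rfl⟩
      have hfinset : {j | kk j < K}.Finite :=
        Set.Finite.subset (Set.Finite.biUnion (Finset.finite_toSet _)
          (fun k _ => (hfin k))) hsub
      obtain ⟨N, hN⟩ := hfinset.bddAbove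
      refine ⟨N + 1, fun n hn => ?_⟩
      by_contra h
      push_neg at h
      have := hN (Set.mem_setOf_eq ▸ h : n ∈ {j | kk j < K})
      omega
    exact case_two h2 T y hy kk htend (half_pos hε) (fun j => hkk j)

end
end

section
/- Let A : E^k → F be continuous k-linear and suppose that whenever one of k weakly Cauchy sequences is replaced by the difference of two of its subsequences (hence weakly null), A applied to the resulting tuple tends to 0 in norm. Then for any weakly Cauchy sequences (x₁ⁿ), …, (x_kⁿ) in E, the sequence (A(x₁ⁿ, …, x_kⁿ))ₙ is norm Cauchy, hence norm convergent. -/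
open Filter Topology NormedSpace ContinuousLinearMap ZeroAtInfty

noncomputable section

theorem norm_cauchy_of_weakly_null_case {E F : Type*} [NormedAddCommGroup E] [NormedSpace ℝ E] [CompleteSpace E] [NormedAddCommGroup F] [NormedSpace ℝ F] [CompleteSpace F]
    {k : ℕ} (A : ContinuousMultilinearMap ℝ (fun _ : Fin k => E) F)
    (h : ∀ (y : Fin k → ℕ → E), (∀ j, WeaklyCauchy (y j)) →
      ∀ j₀ : Fin k, WeaklyConvTo (y j₀) 0 →
        Tendsto (fun n => ‖A fun j => y j n‖) atTop (𝓝 0))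
    (x : Fin k → ℕ → E) (hx : ∀ j, WeaklyCauchy (x j)) :
    CauchySeq (fun n => A fun j => x j n) ∧
      ∃ y : F, Tendsto (fun n => A fun j => x j n) atTop (𝓝 y) := by
  have key : CauchySeq (fun n => A fun j => x j n) := by
    by_contra hc
    rw [Metric.cauchySeq_iff] at hc
    push_neg at hc
    obtain ⟨ε, hε, hN⟩ := hc
    choose r hr s hs hdist using hN
    have hrtop : Tendsto r atTop atTop := tendsto_atTop_mono hr tendsto_id
    have hstop : Tendsto s atTop atTop := tendsto_atTop_mono hs tendsto_id
    set g : ℕ → ℕ → F := fun j n =>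
      A fun i : Fin k => if (i : ℕ) < j then x i (s n) else x i (r n) with hg
    have hterm : ∀ j, j < k → Tendsto (fun n => g j n - g (j + 1) n) atTop (𝓝 0) := by
      intro j hj
      set jf : Fin k := ⟨j, hj⟩ with hjf
      set y : Fin k → ℕ → E := fun i n =>
        if (i : ℕ) < j then x i (s n)
        else if (i : ℕ) = j then x i (r n) - x i (s n) else x i (r n) with hy
      have hyc : ∀ i, WeaklyCauchy (y i) := by
        intro i φ
        obtain ⟨l, hl⟩ := hx i φ
        by_cases h1 : (i : ℕ) < j
        · exact ⟨l, by simpa [y, h1, Function.comp_def] using hl.comp hstop⟩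
        · by_cases h2 : (i : ℕ) = j
          · refine ⟨0, ?_⟩
            have := (hl.comp hrtop).sub (hl.comp hstop)
            simpa [y, h1, h2, map_sub] using this
          · exact ⟨l, by simpa [y, h1, h2, Function.comp_def] using hl.comp hrtop⟩
      have hynull : WeaklyConvTo (y jf) 0 := by
        intro φ
        obtain ⟨l, hl⟩ := hx jf φ
        have := (hl.comp hrtop).sub (hl.comp hstop)
        simpa [y, jf, map_sub] using this
      have hmain := h y hyc jf hynull
      have hA : ∀ n, (A fun i => y i n) = g j n - g (j + 1) n := by
        intro n
        set m : Fin k → E := fun i : Fin k => if (i : ℕ) < j then x i (s n) else x i (r n)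
          with hm
        have e1 : (fun i => y i n) =
            Function.update m jf (x jf (r n) - x jf (s n)) := by
          funext i
          rcases eq_or_ne i jf with rfl | hne
          · simp [y, m, jf]
          · have hij : (i : ℕ) ≠ j := fun hh => hne (Fin.ext hh)
            simp [y, m, Function.update_of_ne hne, hij]
        have e2 : Function.update m jf (x jf (r n)) = m := by
          funext i
          rcases eq_or_ne i jf with rfl | hne
          · simp [m, jf]
          · simp [Function.update_of_ne hne]
        have e3 : Function.update m jf (x jf (s n)) =
            fun i : Fin k => if (i : ℕ) < j + 1 then x i (s n) else x i (r n) := by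
          funext i
          rcases eq_or_ne i jf with rfl | hne
          · simp [m, jf]
          · have hij : (i : ℕ) ≠ j := fun hh => hne (Fin.ext hh)
            have : (i : ℕ) < j + 1 ↔ (i : ℕ) < j := by omega
            simp [Function.update_of_ne hne, m, this]
        rw [e1, A.map_update_sub, e2, e3]
      have : Tendsto (fun n => A fun i => y i n) atTop (𝓝 0) := by
        rw [tendsto_zero_iff_norm_tendsto_zero]
        exact hmain
      simpa [funext hA] using this
    have hsum : Tendsto (fun n => g 0 n - g k n) atTop (𝓝 0) := by
      have he : (fun n => g 0 n - g k n) =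
          fun n => ∑ j ∈ Finset.range k, (g j n - g (j + 1) n) := by
        funext n
        exact (Finset.sum_range_sub' (fun j => g j n) k).symm
      rw [he]
      have := tendsto_finset_sum (Finset.range k)
        (fun j hj => hterm j (Finset.mem_range.mp hj))
      simpa using this
    have hg0 : ∀ n, g 0 n = A fun i => x i (r n) := by
      intro n; simp [g]
    have hgk : ∀ n, g k n = A fun i => x i (s n) := by
      intro n; simp [g, Fin.is_lt]
    rw [Metric.tendsto_atTop] at hsum
    obtain ⟨N, hNn⟩ := hsum ε hε
    have h1 := hNn N le_rfl
    rw [dist_zero_right] at h1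
    have h2 := hdist N
    rw [dist_eq_norm] at h2
    rw [hg0 N, hgk N] at h1
    exact absurd h1 (not_lt.mpr h2)
  exact ⟨key, cauchySeq_tendsto_of_complete key⟩

end
end

section
/- Suppose E has the Dunford–Pettis property and every bounded linear operator from E to F is weakly compact. Then for every k ∈ ℕ, every continuous k-homogeneous polynomial from E to F is completely continuous. -/
open Filter Topology NormedSpace ContinuousLinearMap ZeroAtInfty

noncomputable section

namespace DPPaux


variable {E : Type*} [NormedAddCommGroup E] [NormedSpace ℝ E]

/-- evaluation of a functional is continuous on the weak space -/
lemma eval_cont {G : Type*} [NormedAddCommGroup G] [NormedSpace ℝ G] (ψ : G →L[ℝ] ℝ) :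
    Continuous fun x : WeakSpace ℝ G => ψ x :=
  WeakBilin.eval_continuous ((topDualPairing ℝ G).flip) ψ

lemma dual_sep {G : Type*} [NormedAddCommGroup G] [NormedSpace ℝ G] {a b : G}
    (hab : ∀ ψ : StrongDual ℝ G, ψ a = ψ b) : a = b := by
  by_contra hne
  obtain ⟨ψ, -, hψ⟩ := exists_dual_vector ℝ (a - b) (norm_ne_zero_iff.mpr (sub_ne_zero.mpr hne))
  have : ψ (a - b) = 0 := by rw [map_sub, hab ψ, sub_self]
  rw [this] at hψ
  have : a - b = 0 := by
    rw [← norm_eq_zero]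
    exact_mod_cast hψ.symm
  exact hne (sub_eq_zero.mp this)

instance weakT2 (G : Type*) [NormedAddCommGroup G] [NormedSpace ℝ G] :
    T2Space (WeakSpace ℝ G) := by
  constructor
  intro x y hxy
  obtain ⟨ψ, hψ⟩ : ∃ ψ : StrongDual ℝ G, ψ ((toWeakSpace ℝ G).symm x) ≠ ψ ((toWeakSpace ℝ G).symm y) := by
    by_contra hc
    push_neg at hc
    exact hxy ((toWeakSpace ℝ G).symm.injective (dual_sep hc))
  exact separated_by_continuous
    (f := fun w : WeakSpace ℝ G => ψ ((toWeakSpace ℝ G).symm w)) (eval_cont ψ) hψ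

lemma exists_norming {G : Type*} [NormedAddCommGroup G] [NormedSpace ℝ G] (v : G) :
    ∃ ψ : StrongDual ℝ G, ‖ψ‖ ≤ 1 ∧ ψ v = ‖v‖ := by
  rcases eq_or_ne v 0 with rfl | hv
  · exact ⟨0, by simp⟩
  · obtain ⟨ψ, h1, h2⟩ := exists_dual_vector ℝ v (norm_ne_zero_iff.mpr hv)
    exact ⟨ψ, le_of_eq h1, by exact_mod_cast h2⟩

lemma weakly_bounded {x : ℕ → E} {x₀ : E} (hx : WeaklyConvTo x x₀) :
    ∃ M : ℝ, 0 ≤ M ∧ ∀ n, ‖x n‖ ≤ M := by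
  have hpt : ∀ φ : StrongDual ℝ E, ∃ C, ∀ n,
      ‖(inclusionInDoubleDualLi ℝ (E := E) (x n)) φ‖ ≤ C := by
    intro φ
    have : Tendsto (fun n => ‖φ (x n)‖) atTop (𝓝 ‖φ x₀‖) := (hx φ).norm
    obtain ⟨C, hC⟩ := this.bddAbove_range
    exact ⟨C, fun n => by
      exact (hC (Set.mem_range_self n) : ‖φ (x n)‖ ≤ C)⟩
  obtain ⟨C', hC'⟩ := banach_steinhaus (g := fun n => (inclusionInDoubleDualLi ℝ (E := E) (x n))) hpt
  refine ⟨max C' 0, le_max_right _ _, fun n => ?_⟩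
  have := (inclusionInDoubleDualLi ℝ (E := E)).norm_map (x n)
  rw [← this]
  exact le_trans (hC' n) (le_max_left _ _)

lemma weaklyConvTo_sub {x : ℕ → E} {x₀ : E} (hx : WeaklyConvTo x x₀) :
    WeaklyConvTo (fun n => x n - x₀) 0 := by
  intro φ
  simpa [map_sub] using (hx φ).sub_const (φ x₀)

lemma weaklyConvTo_comp {x : ℕ → E} {x₀ : E} (hx : WeaklyConvTo x x₀) {σ : ℕ → ℕ}
    (hσ : StrictMono σ) : WeaklyConvTo (fun j => x (σ j)) x₀ :=
  fun φ => (hx φ).comp hσ.tendsto_atTop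



abbrev c0 : Type := ZeroAtInftyContinuousMap ℕ ℝ

def mkC0 (u : ℕ → ℝ) (hu : Tendsto u atTop (𝓝 0)) : c0 :=
  ⟨⟨u, continuous_of_discreteTopology⟩, by simpa [cocompact_eq_atTop] using hu⟩

@[simp] lemma mkC0_apply (u : ℕ → ℝ) (hu) (m : ℕ) : mkC0 u hu m = u m := rfl

lemma c0_tendsto (f : c0) : Tendsto (fun m => f m) atTop (𝓝 0) := by
  have := f.zero_at_infty'
  rwa [cocompact_eq_atTop] at this

lemma c0_coord_le (f : c0) (m : ℕ) : |f m| ≤ ‖f‖ := by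
  rw [← Real.norm_eq_abs, ← ZeroAtInftyContinuousMap.norm_toBCF_eq_norm]
  exact BoundedContinuousFunction.norm_coe_le_norm f.toBCF m

lemma c0_norm_le (f : c0) {C : ℝ} (hC : 0 ≤ C) (h : ∀ m, |f m| ≤ C) : ‖f‖ ≤ C := by
  rw [← ZeroAtInftyContinuousMap.norm_toBCF_eq_norm]
  exact (BoundedContinuousFunction.norm_le hC).mpr (fun m => by simpa [Real.norm_eq_abs] using h m)

lemma c0_sum_apply {ι : Type*} (s : Finset ι) (f : ι → c0) (m : ℕ) :
    (∑ i ∈ s, f i) m = ∑ i ∈ s, f i m := by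
  classical
  induction s using Finset.cons_induction with
  | empty => simp
  | cons a s ha ih =>
      rw [Finset.sum_cons, Finset.sum_cons, ZeroAtInftyContinuousMap.add_apply, ih]

/-- canonical basis vectors of c₀ -/
def e (n : ℕ) : c0 :=
  mkC0 (fun m => if m = n then 1 else 0) <| by
    apply Tendsto.congr' (f₁ := fun _ => (0:ℝ))
    · filter_upwards [eventually_ge_atTop (n+1)] with m hm
      have : m ≠ n := by omega
      simp [this]
    · exact tendsto_const_nhds

@[simp] lemma e_apply (n m : ℕ) : e n m = if m = n then 1 else 0 := rfl

lemma c0_trunc_tendsto (u : c0) :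
    Tendsto (fun N => ∑ n ∈ Finset.range N, u n • e n) atTop (𝓝 u) := by
  rw [Metric.tendsto_atTop]
  intro ε hε
  obtain ⟨N₀, hN₀⟩ := (Metric.tendsto_atTop.mp (c0_tendsto u)) (ε/2) (half_pos hε)
  refine ⟨N₀, fun N hN => ?_⟩
  rw [dist_eq_norm]
  have hcoord : ∀ m, |(∑ n ∈ Finset.range N, u n • e n - u) m| ≤ ε/2 := by
    intro m
    have hval : (∑ n ∈ Finset.range N, u n • e n - u) m
        = (if m ∈ Finset.range N then u m else 0) - u m := by
      have : (∑ n ∈ Finset.range N, u n • e n) m = ∑ n ∈ Finset.range N, u n * (e n m) := by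
        rw [c0_sum_apply]; rfl
      rw [ZeroAtInftyContinuousMap.sub_apply, this]
      congr 1
      rw [Finset.sum_congr rfl (fun n _ => by rw [e_apply, mul_ite, mul_one, mul_zero])]
      simp [Finset.sum_ite_eq]
    rw [hval]
    by_cases hm : m ∈ Finset.range N
    · simp [hm, le_of_lt (half_pos hε)]
    · have hmN : m ≥ N₀ := by
        simp only [Finset.mem_range, not_lt] at hm
        omega
      have := hN₀ m hmN
      rw [Real.dist_eq, sub_zero] at this
      simp only [hm, if_false, zero_sub, abs_neg]
      exact le_of_lt this
  calc ‖∑ n ∈ Finset.range N, u n • e n - u‖ ≤ ε/2 := c0_norm_le _ (le_of_lt (half_pos hε)) hcoord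
    _ < ε := half_lt_self hε

/-- Representation of functionals on c₀ by absolutely summable sequences. -/
lemma c0_dual_rep (Λ : StrongDual ℝ c0) :
    ∃ a : ℕ → ℝ, Summable (fun n => |a n|) ∧ (∑' n, |a n|) ≤ ‖Λ‖ ∧
      ∀ u : c0, HasSum (fun n => a n * u n) (Λ u) := by
  classical
  set a : ℕ → ℝ := fun n => Λ (e n) with ha
  have hsumbd : ∀ N : ℕ, ∑ n ∈ Finset.range N, |a n| ≤ ‖Λ‖ := by
    intro N
    set g : c0 := ∑ n ∈ Finset.range N, (if 0 ≤ a n then (1:ℝ) else -1) • e n with hg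
    have hΛg : Λ g = ∑ n ∈ Finset.range N, |a n| := by
      rw [hg, map_sum]
      refine Finset.sum_congr rfl (fun n _ => ?_)
      rw [map_smul]
      by_cases hn : 0 ≤ a n
      · simp [hn, abs_of_nonneg hn, ← ha]; rfl
      · simp only [hn, if_false, smul_eq_mul, neg_one_mul, ← ha]
        rw [abs_of_neg (lt_of_not_ge hn)]
    have hgnorm : ‖g‖ ≤ 1 := by
      refine c0_norm_le _ zero_le_one (fun m => ?_)
      have : g m = ∑ n ∈ Finset.range N, (if 0 ≤ a n then (1:ℝ) else -1) * (e n m) := by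
        rw [hg, c0_sum_apply]; rfl
      rw [this, Finset.sum_congr rfl (fun n _ => by rw [e_apply, mul_ite, mul_one, mul_zero])]
      rw [Finset.sum_ite_eq]
      by_cases hm : m ∈ Finset.range N <;> simp [hm] <;> by_cases h0 : 0 ≤ a m <;> simp [h0]
    calc ∑ n ∈ Finset.range N, |a n| = Λ g := hΛg.symm
      _ ≤ ‖Λ‖ * ‖g‖ := by
          have := Λ.le_opNorm g
          exact le_trans (le_abs_self _) (by simpa [Real.norm_eq_abs] using this)
      _ ≤ ‖Λ‖ := by
          nlinarith [norm_nonneg Λ, norm_nonneg g]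
  have hsummable : Summable (fun n => |a n|) :=
    summable_of_sum_range_le (fun n => abs_nonneg _) hsumbd
  refine ⟨a, hsummable, ?_, ?_⟩
  · exact Summable.tsum_le_of_sum_range_le hsummable hsumbd
  · intro u
    have hsu : Summable (fun n => a n * u n) := by
      refine Summable.of_abs (Summable.of_nonneg_of_le (fun n => abs_nonneg _) (fun n => ?_)
        (hsummable.mul_right ‖u‖))
      rw [abs_mul]
      exact mul_le_mul_of_nonneg_left (by simpa using c0_coord_le u n) (abs_nonneg _)
    have hps : ∀ N, ∑ n ∈ Finset.range N, a n * u n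
        = Λ (∑ n ∈ Finset.range N, u n • e n) := by
      intro N
      rw [map_sum]
      exact Finset.sum_congr rfl (fun n _ => by rw [map_smul]; simp [ha, mul_comm])
    have h1 : Tendsto (fun N => ∑ n ∈ Finset.range N, a n * u n) atTop (𝓝 (Λ u)) := by
      rw [show (fun N => ∑ n ∈ Finset.range N, a n * u n)
        = fun N => Λ (∑ n ∈ Finset.range N, u n • e n) from funext hps]
      exact (Λ.continuous.tendsto u).comp (c0_trunc_tendsto u)
    have h2 := hsu.hasSum.tendsto_sum_nat
    have heq : ∑' (b : ℕ), a b * u b = Λ u := tendsto_nhds_unique h2 h1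
    rw [← heq]
    exact hsu.hasSum

set_option maxHeartbeats 1000000 in
lemma c0_dual_tail {Λ : StrongDual ℝ c0} {a : ℕ → ℝ} (ha : Summable (fun n => |a n|))
    (hrep : ∀ u : c0, HasSum (fun n => a n * u n) (Λ u)) (v : c0) {Cb : ℝ} (hCb : 0 ≤ Cb)
    (hv : ∀ n, |v n| ≤ Cb) (N : ℕ) :
    |Λ v - ∑ n ∈ Finset.range N, a n * v n| ≤ Cb * ∑' k, |a (k + N)| := by
  have hsum : Summable (fun n => a n * v n) := (hrep v).summable
  have hsplit := Summable.sum_add_tsum_nat_add (f := fun n => a n * v n) N hsum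
  have hΛv : Λ v = ∑' n, a n * v n := (hrep v).tsum_eq.symm
  have hdiff : Λ v - ∑ n ∈ Finset.range N, a n * v n = ∑' k, a (k + N) * v (k + N) := by
    rw [hΛv, ← hsplit]; ring
  rw [hdiff]
  have hshift : Summable (fun k => |a (k + N)|) := (summable_nat_add_iff N).mpr ha
  have hshift2 : Summable (fun k => a (k + N) * v (k + N)) := (summable_nat_add_iff N).mpr hsum
  calc |∑' k, a (k + N) * v (k + N)| ≤ ∑' k, |a (k + N)| * |v (k + N)| := by
        simpa [Real.norm_eq_abs] using norm_tsum_le_tsum_norm (f := fun k => a (k + N) * v (k + N))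
          (by simpa [Real.norm_eq_abs, abs_mul] using hshift2.abs)
    _ ≤ ∑' k, |a (k + N)| * Cb := by
        refine Summable.tsum_le_tsum (fun k => ?_)
          (by simpa [abs_mul] using hshift2.abs) (hshift.mul_right Cb)
        exact mul_le_mul_of_nonneg_left (hv _) (abs_nonneg _)
    _ = Cb * ∑' k, |a (k + N)| := by rw [tsum_mul_right]; ring

section OpLemma

variable {E : Type*} [NormedAddCommGroup E] [NormedSpace ℝ E] [CompleteSpace E]
variable {F : Type*} [NormedAddCommGroup F] [NormedSpace ℝ F] [CompleteSpace F]

/-- Base case: every continuous linear operator `E → F` maps weakly null sequences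
to norm-null sequences, given DPP of `E` and weak compactness of all operators. -/
lemma opCC (hE : DPP E) (h : ∀ T : E →L[ℝ] F, WCompactOp T) (R : E →L[ℝ] F)
    {z : ℕ → E} (hz : WeaklyConvTo z 0) :
    Tendsto (fun n => ‖R (z n)‖) atTop (𝓝 0) := by
  -- norming functionals for the sequence R (z n)
  have hψex : ∀ n, ∃ ψ : StrongDual ℝ F, ‖ψ‖ ≤ 1 ∧ ψ (R (z n)) = ‖R (z n)‖ :=
    fun n => exists_norming _
  choose ψs hψ1 hψ2 using hψex
  -- the embedding into ℓ∞ determined by these functionals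
  set linf : Type := BoundedContinuousFunction ℕ ℝ with hlinf
  let J : F →L[ℝ] linf :=
    LinearMap.mkContinuous
      { toFun := fun v => BoundedContinuousFunction.ofNormedAddCommGroup
          (fun n => ψs n v) (continuous_of_discreteTopology) ‖v‖
          (fun n => by
            calc ‖ψs n v‖ ≤ ‖ψs n‖ * ‖v‖ := (ψs n).le_opNorm v
              _ ≤ 1 * ‖v‖ := mul_le_mul_of_nonneg_right (hψ1 n) (norm_nonneg v)
              _ = ‖v‖ := one_mul _)
        map_add' := fun v w => by
          ext n
          rw [BoundedContinuousFunction.add_apply]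
          exact map_add (ψs n) v w
        map_smul' := fun c v => by
          ext n
          rw [BoundedContinuousFunction.smul_apply]
          exact map_smul (ψs n) c v }
      1 (fun v => by
        simpa using BoundedContinuousFunction.norm_ofNormedAddCommGroup_le
          continuous_of_discreteTopology (norm_nonneg v) _)
  have hJ : ∀ v n, (J v) n = ψs n v := fun v n => rfl
  set T : E →L[ℝ] linf := J.comp R with hT
  -- T is weakly compact
  have hTw : WCompactOp T := by
    have hRw := h R
    have hcomp : IsCompact ((WeakSpace.map J) ''
        (closure (toWeakSpaceCLM ℝ F '' (R '' Metric.closedBall 0 1)))) :=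
      hRw.image (WeakSpace.map J).continuous
    refine IsCompact.of_isClosed_subset hcomp isClosed_closure (closure_minimal ?_ hcomp.isClosed)
    rintro _ ⟨_, ⟨x, hx, rfl⟩, rfl⟩
    exact ⟨toWeakSpaceCLM ℝ F (R x),
      subset_closure ⟨R x, ⟨x, hx, rfl⟩, rfl⟩, rfl⟩
  have hCC := hE linf inferInstance inferInstance inferInstance T hTw
  have hTz := hCC z 0 hz
  rw [map_zero] at hTz
  have hTznorm : Tendsto (fun n => ‖T (z n)‖) atTop (𝓝 0) :=
    tendsto_zero_iff_norm_tendsto_zero.mp hTz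
  refine squeeze_zero (fun n => norm_nonneg _) (fun n => ?_) hTznorm
  calc ‖R (z n)‖ = ψs n (R (z n)) := (hψ2 n).symm
    _ ≤ ‖(T (z n)) n‖ := by
        rw [show (T (z n)) n = ψs n (R (z n)) from rfl]
        exact le_abs_self _
    _ ≤ ‖T (z n)‖ := BoundedContinuousFunction.norm_coe_le_norm _ n

end OpLemma

section FixLemma

variable {E : Type*} [NormedAddCommGroup E] [NormedSpace ℝ E] [CompleteSpace E]
variable {F : Type*} [NormedAddCommGroup F] [NormedSpace ℝ F] [CompleteSpace F]

/-- Main inductive lemma: every continuous multilinear map sends tuples of weakly null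
sequences to norm-null sequences. -/
lemma fix_lemma (hE : DPP E) (h : ∀ T : E →L[ℝ] F, WCompactOp T) :
    ∀ (m : ℕ) (D : ContinuousMultilinearMap ℝ (fun _ : Fin (m+1) => E) F)
      (y : Fin (m+1) → ℕ → E), (∀ i, WeaklyConvTo (y i) 0) →
      Tendsto (fun n => ‖D fun i => y i n‖) atTop (𝓝 0) := by
  intro m
  induction m with
  | zero =>
      intro D y hy
      have key : ∀ n, D (fun i => y i n) = (continuousMultilinearCurryFin1 ℝ E F D) (y 0 n) := by
        intro n
        rw [continuousMultilinearCurryFin1_apply]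
        congr 1
        funext i
        have hi : i = 0 := Fin.eq_zero i
        subst hi
        simp [Fin.snoc]
      rw [show (fun n => ‖D fun i => y i n‖)
          = fun n => ‖(continuousMultilinearCurryFin1 ℝ E F D) (y 0 n)‖ from
        funext fun n => by rw [key n]]
      exact opCC hE h _ (hy 0)
  | succ m IH =>
      intro D y hy
      classical
      set Dr : ContinuousMultilinearMap ℝ (fun _ : Fin (m+1) => E) (E →L[ℝ] F) :=
        continuousMultilinearCurryRightEquiv ℝ (fun _ : Fin (m+2) => E) F D with hDrdef
      have hDr : ∀ (w : Fin (m+1) → E) (x : E), (Dr w) x = D (Fin.snoc w x) := fun w x =>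
        continuousMultilinearCurryRightEquiv_apply _ _ _
      have hsnoc : ∀ n, (fun i => y i n)
          = Fin.snoc (fun i : Fin (m+1) => y i.castSucc n) (y (Fin.last (m+1)) n) := by
        intro n
        funext i
        refine Fin.lastCases ?_ (fun j => ?_) i
        · rw [Fin.snoc_last]
        · rw [Fin.snoc_castSucc]
      by_contra hcon
      obtain ⟨ε, hε, hfreq⟩ : ∃ ε > 0, ∃ᶠ n in atTop,
          ε ≤ ‖(Dr (fun i : Fin (m+1) => y i.castSucc n)) (y (Fin.last (m+1)) n)‖ := by
        have hnot : ¬ Tendsto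
            (fun n => ‖(Dr (fun i : Fin (m+1) => y i.castSucc n)) (y (Fin.last (m+1)) n)‖)
            atTop (𝓝 0) := by
          intro hten
          apply hcon
          refine hten.congr (fun n => ?_)
          rw [hDr, ← hsnoc n]
        by_contra hno
        push_neg at hno
        apply hnot
        rw [Metric.tendsto_atTop]
        intro δ hδ
        have h2 := hno (δ/2) (half_pos hδ)
        obtain ⟨N, hN⟩ := Filter.eventually_atTop.mp h2
        refine ⟨N, fun n hn => ?_⟩
        rw [Real.dist_eq, sub_zero, abs_of_nonneg (norm_nonneg _)]
        have := hN n hn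
        linarith
      obtain ⟨σ, hσmono, hσ⟩ := extraction_of_frequently_atTop hfreq
      set Y : Fin (m+2) → ℕ → E := fun i j => y i (σ j) with hYdef
      have hYweak : ∀ i, WeaklyConvTo (Y i) 0 := fun i => weaklyConvTo_comp (hy i) hσmono
      set W : ℕ → Fin (m+1) → E := fun j i => Y i.castSucc j with hWdef
      set Z : ℕ → E := Y (Fin.last (m+1)) with hZdef
      set v : ℕ → F := fun j => (Dr (W j)) (Z j) with hvdef
      have hvε : ∀ j, ε ≤ ‖v j‖ := fun j => hσ j
      have hψex : ∀ j, ∃ ψ : StrongDual ℝ F, ‖ψ‖ ≤ 1 ∧ ψ (v j) = ‖v j‖ := fun j => exists_norming _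
      choose ψs hψ1 hψ2 using hψex
      have hbd : ∀ i : Fin (m+2), ∃ Mi, 0 ≤ Mi ∧ ∀ n, ‖y i n‖ ≤ Mi :=
        fun i => weakly_bounded (hy i)
      choose Ms hMs0 hMs using hbd
      set M : ℝ := 1 + ∑ i, Ms i with hMdef
      have hMsum : (0:ℝ) ≤ ∑ i, Ms i := Finset.sum_nonneg fun i _ => hMs0 i
      have hM1 : (1:ℝ) ≤ M := by rw [hMdef]; linarith
      have hM0 : (0:ℝ) ≤ M := le_trans zero_le_one hM1
      have hyM : ∀ (i : Fin (m+2)) (n : ℕ), ‖y i n‖ ≤ M := by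
        intro i n
        have h1 : Ms i ≤ ∑ i, Ms i := Finset.single_le_sum (fun i _ => hMs0 i) (Finset.mem_univ i)
        have h2 := hMs i n
        rw [hMdef]; linarith
      have hWM : ∀ j i, ‖W j i‖ ≤ M := fun j i => hyM _ _
      have hZM : ∀ j, ‖Z j‖ ≤ M := fun j => hyM _ _
      set Cb : ℝ := ‖Dr‖ * M ^ (m+1) with hCbdef
      have hCb0 : (0:ℝ) ≤ Cb :=
        mul_nonneg (ContinuousMultilinearMap.opNorm_nonneg Dr) (pow_nonneg hM0 _)
      have hDrW : ∀ j, ‖Dr (W j)‖ ≤ Cb := by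
        intro j
        refine le_trans (Dr.le_opNorm (W j)) ?_
        refine mul_le_mul_of_nonneg_left ?_ (ContinuousMultilinearMap.opNorm_nonneg Dr)
        have := Finset.prod_le_prod (s := Finset.univ) (f := fun i : Fin (m+1) => ‖W j i‖)
          (g := fun _ => M) (fun i _ => norm_nonneg _) (fun i _ => hWM j i)
        simpa [Finset.prod_const] using this
      -- the product-space compactness machinery
      let g : E → ((StrongDual ℝ F) × (Fin (m+1) → E)) → ℝ := fun x p => p.1 ((Dr p.2) x)
      let bb : ((StrongDual ℝ F) × (Fin (m+1) → E)) → ℝ := fun p => ‖p.1‖ * (‖Dr‖ * ∏ i, ‖p.2 i‖)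
      let box : Set (((StrongDual ℝ F) × (Fin (m+1) → E)) → ℝ) :=
        Set.univ.pi fun p => Set.Icc (-(bb p)) (bb p)
      have hboxc : IsCompact box := isCompact_univ_pi fun p => isCompact_Icc
      have hboxcl : IsClosed box := isClosed_set_pi fun p _ => isClosed_Icc
      have hgball : ∀ x ∈ Metric.closedBall (0:E) 1, g x ∈ box := by
        intro x hx
        rw [Metric.mem_closedBall, dist_zero_right] at hx
        intro p _
        rw [Set.mem_Icc, ← abs_le]
        calc |g x p| = ‖p.1 ((Dr p.2) x)‖ := (Real.norm_eq_abs _).symm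
          _ ≤ ‖p.1‖ * ‖(Dr p.2) x‖ := p.1.le_opNorm _
          _ ≤ ‖p.1‖ * (‖Dr p.2‖ * ‖x‖) :=
              mul_le_mul_of_nonneg_left ((Dr p.2).le_opNorm x) (norm_nonneg _)
          _ ≤ ‖p.1‖ * (‖Dr p.2‖ * 1) := by
              refine mul_le_mul_of_nonneg_left ?_ (norm_nonneg _)
              exact mul_le_mul_of_nonneg_left hx (norm_nonneg _)
          _ = ‖p.1‖ * ‖Dr p.2‖ := by ring
          _ ≤ bb p := by
              refine mul_le_mul_of_nonneg_left ?_ (norm_nonneg _)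
              exact Dr.le_opNorm p.2
      set K : Set (((StrongDual ℝ F) × (Fin (m+1) → E)) → ℝ) :=
        closure (g '' Metric.closedBall 0 1) with hKdef
      have hKsub : K ⊆ box :=
        closure_minimal (by rintro _ ⟨x, hx, rfl⟩; exact hgball x hx) hboxcl
      have hKcomp : IsCompact K := hboxc.of_isClosed_subset isClosed_closure hKsub
      have hKbd : ∀ u ∈ K, ∀ p, |u p| ≤ bb p := by
        intro u hu p
        have := hKsub hu p (Set.mem_univ p)
        rw [Set.mem_Icc] at this
        exact abs_le.mpr this
      -- reconstruction of an F-valued multilinear map from a point of K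
      have hrepr : ∀ u ∈ K, ∃ Du : ContinuousMultilinearMap ℝ (fun _ : Fin (m+1) => E) F,
          ∀ (ψ : StrongDual ℝ F) (w : Fin (m+1) → E), u (ψ, w) = ψ (Du w) := by
        intro u hu
        have hA : ∀ w : Fin (m+1) → E, ∃ f : F, ∀ ψ : StrongDual ℝ F, u (ψ, w) = ψ f := by
          intro w
          have hcw := h (Dr w)
          let θ : WeakSpace ℝ F → (StrongDual ℝ F → ℝ) := fun f ψ => ψ ((toWeakSpace ℝ F).symm f)
          have hθc : Continuous θ := continuous_pi fun ψ => eval_cont ψ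
          let πw : (((StrongDual ℝ F) × (Fin (m+1) → E)) → ℝ) → (StrongDual ℝ F → ℝ) :=
            fun u ψ => u (ψ, w)
          have hπc : Continuous πw := continuous_pi fun ψ => continuous_apply (ψ, w)
          have hθK : IsCompact (θ ''
              closure (toWeakSpaceCLM ℝ F '' ((Dr w) '' Metric.closedBall 0 1))) :=
            hcw.image hθc
          have hsub2 : πw '' (g '' Metric.closedBall 0 1)
              ⊆ θ '' closure (toWeakSpaceCLM ℝ F '' ((Dr w) '' Metric.closedBall 0 1)) := by
            rintro _ ⟨_, ⟨x, hx, rfl⟩, rfl⟩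
            exact ⟨toWeakSpaceCLM ℝ F ((Dr w) x),
              subset_closure ⟨(Dr w) x, ⟨x, hx, rfl⟩, rfl⟩, rfl⟩
          have hu2 : πw u ∈ θ ''
              closure (toWeakSpaceCLM ℝ F '' ((Dr w) '' Metric.closedBall 0 1)) := by
            have h1 : πw u ∈ closure (πw '' (g '' Metric.closedBall 0 1)) :=
              image_closure_subset_closure_image hπc ⟨u, hu, rfl⟩
            exact closure_minimal hsub2 hθK.isClosed h1
          obtain ⟨f, -, hf⟩ := hu2
          exact ⟨(toWeakSpace ℝ F).symm f, fun ψ => (congrFun hf ψ).symm⟩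
        choose fw hfw using hA
        have hulin : ∀ (p₁ p₂ p₃ : (StrongDual ℝ F) × (Fin (m+1) → E)) (c₂ c₃ : ℝ),
            (∀ x ∈ Metric.closedBall (0:E) 1, g x p₁ = c₂ * g x p₂ + c₃ * g x p₃) →
            u p₁ = c₂ * u p₂ + c₃ * u p₃ := by
          intro p₁ p₂ p₃ c₂ c₃ hgx
          have hcl : IsClosed {w : ((StrongDual ℝ F) × (Fin (m+1) → E)) → ℝ |
              w p₁ = c₂ * w p₂ + c₃ * w p₃} :=
            isClosed_eq (continuous_apply p₁)
              ((continuous_const.mul (continuous_apply p₂)).add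
                (continuous_const.mul (continuous_apply p₃)))
          exact closure_minimal (by rintro _ ⟨x, hx, rfl⟩; exact hgx x hx) hcl hu
        have hfw_add : ∀ (w : Fin (m+1) → E) (i : Fin (m+1)) (x₁ x₂ : E),
            fw (Function.update w i (x₁ + x₂))
              = fw (Function.update w i x₁) + fw (Function.update w i x₂) := by
          intro w i x₁ x₂
          refine dual_sep fun ψ => ?_
          rw [map_add, ← hfw _ ψ, ← hfw _ ψ, ← hfw _ ψ]
          have := hulin (ψ, Function.update w i (x₁ + x₂)) (ψ, Function.update w i x₁)
            (ψ, Function.update w i x₂) 1 1 ?_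
          · rw [this]; ring
          · intro x _
            show ψ ((Dr (Function.update w i (x₁ + x₂))) x) = _
            rw [ContinuousMultilinearMap.map_update_add]
            rw [ContinuousLinearMap.add_apply, map_add]
            ring
        have hfw_smul : ∀ (w : Fin (m+1) → E) (i : Fin (m+1)) (c : ℝ) (x : E),
            fw (Function.update w i (c • x)) = c • fw (Function.update w i x) := by
          intro w i c x
          refine dual_sep fun ψ => ?_
          rw [map_smul, ← hfw _ ψ, ← hfw _ ψ]
          have := hulin (ψ, Function.update w i (c • x)) (ψ, Function.update w i x)
            (ψ, Function.update w i x) c 0 ?_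
          · rw [this]; simp
          · intro x' _
            show ψ ((Dr (Function.update w i (c • x))) x') = _
            rw [ContinuousMultilinearMap.map_update_smul]
            rw [ContinuousLinearMap.smul_apply, map_smul]
            simp
            exact Or.inl rfl
        have hfw_bd : ∀ w : Fin (m+1) → E, ‖fw w‖ ≤ ‖Dr‖ * ∏ i, ‖w i‖ := by
          intro w
          refine norm_le_dual_bound ℝ (fw w)
            (mul_nonneg (ContinuousMultilinearMap.opNorm_nonneg Dr)
              (Finset.prod_nonneg fun i _ => norm_nonneg _))
            (fun ψ => ?_)
          rw [← hfw _ ψ]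
          have := hKbd u hu (ψ, w)
          rw [Real.norm_eq_abs]
          calc |u (ψ, w)| ≤ ‖ψ‖ * (‖Dr‖ * ∏ i, ‖w i‖) := this
            _ = (‖Dr‖ * ∏ i, ‖w i‖) * ‖ψ‖ := by ring
        let Dlin : MultilinearMap ℝ (fun _ : Fin (m+1) => E) F :=
          { toFun := fw
            map_update_add' := by
              intro inst w i x₁ x₂
              have hinst : inst = instDecidableEqFin (m+1) := Subsingleton.elim _ _
              subst hinst
              exact hfw_add w i x₁ x₂
            map_update_smul' := by
              intro inst w i c x
              have hinst : inst = instDecidableEqFin (m+1) := Subsingleton.elim _ _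
              subst hinst
              exact hfw_smul w i c x }
        refine ⟨Dlin.mkContinuous (‖Dr‖) (fun w => hfw_bd w), fun ψ w => ?_⟩
        rw [hfw w ψ]
        rfl
      choose DK hDK using hrepr
      -- the operator into c₀
      have hcoord0 : ∀ x : E, Tendsto (fun j => ψs j ((Dr (W j)) x)) atTop (𝓝 0) := by
        intro x
        have hIH := IH (((ContinuousLinearMap.apply ℝ F x)).compContinuousMultilinearMap Dr)
          (fun i => Y i.castSucc) (fun i => hYweak i.castSucc)
        refine squeeze_zero_norm (fun j => ?_) hIH
        calc ‖ψs j ((Dr (W j)) x)‖ ≤ ‖ψs j‖ * ‖(Dr (W j)) x‖ := (ψs j).le_opNorm _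
          _ ≤ 1 * ‖(Dr (W j)) x‖ := mul_le_mul_of_nonneg_right (hψ1 j) (norm_nonneg _)
          _ = ‖(Dr (W j)) x‖ := one_mul _
          _ = ‖(((ContinuousLinearMap.apply ℝ F x)).compContinuousMultilinearMap Dr)
                (fun i => Y i.castSucc j)‖ := rfl
      let L : E →ₗ[ℝ] c0 :=
        { toFun := fun x => mkC0 (fun j => ψs j ((Dr (W j)) x)) (hcoord0 x)
          map_add' := fun x₁ x₂ => by
            ext j
            show ψs j ((Dr (W j)) (x₁ + x₂)) = _
            rw [ZeroAtInftyContinuousMap.add_apply]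
            rw [map_add, map_add]
            rfl
          map_smul' := fun c x => by
            ext j
            show ψs j ((Dr (W j)) (c • x)) = _
            rw [ZeroAtInftyContinuousMap.smul_apply]
            rw [map_smul, map_smul]
            rfl }
      have hLbd : ∀ x : E, ‖L x‖ ≤ Cb * ‖x‖ := by
        intro x
        refine c0_norm_le _ (mul_nonneg hCb0 (norm_nonneg _)) (fun j => ?_)
        have h1 : |ψs j ((Dr (W j)) x)| ≤ ‖ψs j‖ * ‖(Dr (W j)) x‖ := (ψs j).le_opNorm _
        calc |(L x) j| = |ψs j ((Dr (W j)) x)| := rfl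
          _ ≤ ‖ψs j‖ * ‖(Dr (W j)) x‖ := h1
          _ ≤ 1 * ‖(Dr (W j)) x‖ := mul_le_mul_of_nonneg_right (hψ1 j) (norm_nonneg _)
          _ = ‖(Dr (W j)) x‖ := one_mul _
          _ ≤ ‖Dr (W j)‖ * ‖x‖ := (Dr (W j)).le_opNorm x
          _ ≤ Cb * ‖x‖ := mul_le_mul_of_nonneg_right (hDrW j) (norm_nonneg _)
      let T : E →L[ℝ] c0 := L.mkContinuous Cb hLbd
      -- Φ on K and weak compactness of T
      haveI : CompactSpace K := isCompact_iff_compactSpace.mp hKcomp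
      have hΦ0 : ∀ u : K, Tendsto (fun j => (u : ((StrongDual ℝ F) × (Fin (m+1) → E)) → ℝ) (ψs j, W j))
          atTop (𝓝 0) := by
        intro u
        have hIH := IH (DK u.1 u.2) (fun i => Y i.castSucc) (fun i => hYweak i.castSucc)
        refine squeeze_zero_norm (fun j => ?_) hIH
        rw [hDK u.1 u.2 (ψs j) (W j)]
        calc ‖ψs j ((DK u.1 u.2) (W j))‖ ≤ ‖ψs j‖ * ‖(DK u.1 u.2) (W j)‖ := (ψs j).le_opNorm _
          _ ≤ 1 * ‖(DK u.1 u.2) (W j)‖ := mul_le_mul_of_nonneg_right (hψ1 j) (norm_nonneg _)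
          _ = ‖(DK u.1 u.2) ((fun i => Y i.castSucc) · j)‖ := by rw [one_mul]
      let Φ : K → c0 := fun u => mkC0 (fun j => u.1 (ψs j, W j)) (hΦ0 u)
      have hΦbd : ∀ (u : K) (j : ℕ), |(Φ u) j| ≤ Cb := by
        intro u j
        have hb := hKbd u.1 u.2 (ψs j, W j)
        calc |(Φ u) j| = |u.1 (ψs j, W j)| := rfl
          _ ≤ ‖ψs j‖ * (‖Dr‖ * ∏ i, ‖W j i‖) := hb
          _ ≤ 1 * (‖Dr‖ * ∏ i, ‖W j i‖) := by
              refine mul_le_mul_of_nonneg_right (hψ1 j) ?_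
              exact mul_nonneg (ContinuousMultilinearMap.opNorm_nonneg Dr)
                (Finset.prod_nonneg fun i _ => norm_nonneg _)
          _ = ‖Dr‖ * ∏ i, ‖W j i‖ := one_mul _
          _ ≤ ‖Dr‖ * M ^ (m+1) := by
              refine mul_le_mul_of_nonneg_left ?_ (ContinuousMultilinearMap.opNorm_nonneg Dr)
              have := Finset.prod_le_prod (s := Finset.univ) (f := fun i : Fin (m+1) => ‖W j i‖)
                (g := fun _ => M) (fun i _ => norm_nonneg _) (fun i _ => hWM j i)
              simpa [Finset.prod_const] using this
      let Φw : K → WeakSpace ℝ c0 := fun u => toWeakSpaceCLM ℝ c0 (Φ u)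
      have hΦcont : Continuous Φw := by
        apply WeakBilin.continuous_of_continuous_eval
        intro Λ
        obtain ⟨a, ha, hanorm, harep⟩ := c0_dual_rep Λ
        have htail : Tendsto (fun N => ∑' k, |a (k + N)|) atTop (𝓝 0) := by
          simpa using tendsto_sum_nat_add (fun n => |a n|)
        have hSN_cont : ∀ N : ℕ, Continuous (fun u : K =>
            ∑ n ∈ Finset.range N, a n * u.1 (ψs n, W n)) := by
          intro N
          refine continuous_finset_sum _ (fun n _ => ?_)
          exact continuous_const.mul ((continuous_apply (ψs n, W n)).comp continuous_subtype_val)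
        have hTU : TendstoUniformly (fun N (u : K) =>
            ∑ n ∈ Finset.range N, a n * u.1 (ψs n, W n))
            (fun u : K => Λ (Φ u)) atTop := by
          rw [Metric.tendstoUniformly_iff]
          intro δ hδ
          have hev : ∀ᶠ N in atTop, Cb * ∑' k, |a (k + N)| < δ := by
            have h1 : Tendsto (fun N => Cb * ∑' k, |a (k + N)|) atTop (𝓝 0) := by
              simpa using htail.const_mul Cb
            exact h1.eventually (gt_mem_nhds hδ)
          filter_upwards [hev] with N hN u
          rw [Real.dist_eq]
          have hct := c0_dual_tail ha harep (Φ u) hCb0 (fun j => hΦbd u j) N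
          calc |Λ (Φ u) - ∑ n ∈ Finset.range N, a n * u.1 (ψs n, W n)|
              = |Λ (Φ u) - ∑ n ∈ Finset.range N, a n * (Φ u) n| := rfl
            _ ≤ Cb * ∑' k, |a (k + N)| := hct
            _ < δ := hN
        exact hTU.continuous (Filter.Eventually.of_forall hSN_cont).frequently
      have hTw : WCompactOp T := by
        have hrange : IsCompact (Set.range Φw) :=
          isCompact_range hΦcont
        refine IsCompact.of_isClosed_subset hrange isClosed_closure
          (closure_minimal ?_ hrange.isClosed)
        rintro _ ⟨_, ⟨x, hx, rfl⟩, rfl⟩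
        exact ⟨⟨g x, subset_closure ⟨x, hx, rfl⟩⟩, rfl⟩
      have hCC := hE c0 inferInstance inferInstance inferInstance T hTw
      have hZweak : WeaklyConvTo Z 0 := hYweak (Fin.last (m+1))
      have hTZ := hCC Z 0 hZweak
      rw [map_zero] at hTZ
      have hTZ' : Tendsto (fun j => ‖T (Z j)‖) atTop (𝓝 0) :=
        tendsto_zero_iff_norm_tendsto_zero.mp hTZ
      obtain ⟨j, hj⟩ := (hTZ'.eventually (gt_mem_nhds hε)).exists
      have hTZj : ε ≤ ‖T (Z j)‖ := by
        calc ε ≤ ‖v j‖ := hvε j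
          _ = ψs j (v j) := (hψ2 j).symm
          _ = (T (Z j)) j := rfl
          _ ≤ |(T (Z j)) j| := le_abs_self _
          _ ≤ ‖T (Z j)‖ := c0_coord_le _ j
      linarith


end FixLemma
end DPPaux

theorem dpp_weakly_compact_implies_cc_poly {E F : Type*} [NormedAddCommGroup E] [NormedSpace ℝ E] [CompleteSpace E] [NormedAddCommGroup F] [NormedSpace ℝ F] [CompleteSpace F]
    (hE : DPP E) (h : ∀ T : E →L[ℝ] F, WCompactOp T) :
    ∀ (k : ℕ) (A : ContinuousMultilinearMap ℝ (fun _ : Fin k => E) F) (x : ℕ → E) (x₀ : E), WeaklyConvTo x x₀ →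
      Tendsto (fun n => A fun _ => x n) atTop (𝓝 (A fun _ => x₀)) := by
  intro k A x x₀ hx
  classical
  have hz : WeaklyConvTo (fun n => x n - x₀) 0 := DPPaux.weaklyConvTo_sub hx
  have hexp : ∀ n, (A fun _ => x n)
      = ∑ s : Finset (Fin k), A (s.piecewise (fun _ => x n - x₀) (fun _ => x₀)) := by
    intro n
    have h1 : (fun _ : Fin k => x n)
        = (fun _ : Fin k => x n - x₀) + (fun _ : Fin k => x₀) := by
      funext i; simp
    rw [h1]
    exact A.toMultilinearMap.map_add_univ _ _
  have hterm : ∀ s : Finset (Fin k),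
      Tendsto (fun n => A (s.piecewise (fun _ => x n - x₀) (fun _ => x₀))) atTop
        (𝓝 (if s = ∅ then A (fun _ => x₀) else 0)) := by
    intro s
    rcases eq_or_ne s ∅ with rfl | hne
    · simp only [Finset.piecewise_empty, if_pos rfl]
      exact tendsto_const_nhds
    · rw [if_neg hne]
      obtain ⟨m, hm⟩ : ∃ m, s.card = m + 1 := by
        have : s.card ≠ 0 := by simpa [Finset.card_eq_zero] using hne
        exact ⟨s.card - 1, by omega⟩
      have hfix := DPPaux.fix_lemma hE h m (A.restr s hm x₀)
        (fun _ => fun n => x n - x₀) (fun _ => hz)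
      rw [tendsto_zero_iff_norm_tendsto_zero]
      refine hfix.congr (fun n => ?_)
      congr 1
  have hsum := tendsto_finset_sum (Finset.univ : Finset (Finset (Fin k)))
    (fun s _ => hterm s)
  have hlim : (∑ s : Finset (Fin k), if s = ∅ then A (fun _ => x₀) else 0)
      = A (fun _ => x₀) := by
    rw [Finset.sum_ite_eq' Finset.univ (∅ : Finset (Fin k)) (fun _ => A (fun _ => x₀))]
    simp
  rw [show (fun n => A fun _ => x n)
      = fun n => ∑ s : Finset (Fin k), A (s.piecewise (fun _ => x n - x₀) (fun _ => x₀))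
      from funext hexp]
  rw [← hlim]
  exact hsum

end
end
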